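/- For real a > 0 and b, the oscillatory sum (1/N)Σ_{j=1}^{N} e^{2πib√(1-(j/N)²)} converges as N → ∞ to ∫₀¹ e^{2πib√(1-y²)} dy, and this integral is O(1/√(|b|)) as |b| → ∞; more precisely |∫₀¹ e^{2πib√(1-y²)} dy| ≤ C/√(1+|b|) for an absolute constant C. -/

import Mathlib

open Real Complex Filter intervalIntegral

open Real Complex Filter intervalIntegral

lemma riemann_sum_tendsto (f : ℝ → ℂ) (hf : Continuous f) :
    Tendsto (fun N : ℕ => (1 / (N : ℂ)) * ∑ j ∈ Finset.Icc 1 N, f ((j : ℝ) / N))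
      atTop (nhds (∫ y in (0:ℝ)..1, f y)) := by
  rw [Metric.tendsto_atTop]
  intro ε hε
  obtain ⟨δ, hδ, hδ'⟩ := Metric.uniformContinuousOn_iff.mp
    ((isCompact_Icc (a := (0:ℝ)) (b := 1)).uniformContinuousOn_of_continuous
      hf.continuousOn) (ε/2) (by linarith)
  obtain ⟨N₀, hN₀⟩ := exists_nat_gt (1/δ)
  refine ⟨max N₀ 1, fun N hN => ?_⟩
  have hN1 : 1 ≤ N := le_trans (le_max_right _ _) hN
  have hNpos : (0:ℝ) < N := by exact_mod_cast hN1
  have hinv : 1 / (N:ℝ) < δ := by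
    rw [div_lt_iff₀ hNpos]
    rw [div_lt_iff₀ hδ] at hN₀
    have : (N₀ : ℝ) ≤ N := by exact_mod_cast le_trans (le_max_left _ _) hN
    nlinarith
  have hsplit : (∫ y in (0:ℝ)..1, f y)
      = ∑ k ∈ Finset.range N, ∫ y in ((k:ℝ)/N)..(((k:ℝ)+1)/N), f y := by
    have h := intervalIntegral.sum_integral_adjacent_intervals
      (a := fun k : ℕ => (k:ℝ)/N) (n := N) (f := f) (μ := MeasureTheory.volume)
      (fun k _ => hf.intervalIntegrable _ _)
    simp only [Nat.cast_zero, zero_div] at h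
    rw [div_self hNpos.ne'] at h
    rw [← h]
    exact Finset.sum_congr rfl fun k _ => by push_cast; ring_nf
  have hsum : (1 / (N : ℂ)) * ∑ j ∈ Finset.Icc 1 N, f ((j : ℝ) / N)
      = ∑ k ∈ Finset.range N, (1/(N:ℂ)) * f (((k:ℝ)+1)/N) := by
    rw [Finset.mul_sum, ← Finset.Ico_add_one_right_eq_Icc, Finset.sum_Ico_eq_sum_range]
    exact Finset.sum_congr rfl fun k _ => by push_cast; ring_nf
  rw [dist_eq_norm, hsum, hsplit, ← Finset.sum_sub_distrib]
  have hterm : ∀ k ∈ Finset.range N,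
      ‖(1/(N:ℂ)) * f (((k:ℝ)+1)/N) - ∫ y in ((k:ℝ)/N)..(((k:ℝ)+1)/N), f y‖ ≤ (ε/2) * (1/N) := by
    intro k hk
    have hkN : (k:ℝ) + 1 ≤ N := by exact_mod_cast Finset.mem_range.mp hk
    have hconst : (1/(N:ℂ)) * f (((k:ℝ)+1)/N)
        = ∫ _ in ((k:ℝ)/N)..(((k:ℝ)+1)/N), f (((k:ℝ)+1)/N) := by
      rw [intervalIntegral.integral_const]
      have : ((k:ℝ)+1)/N - (k:ℝ)/N = 1/N := by field_simp; ring
      rw [this, Complex.real_smul]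
      push_cast
      ring
    rw [hconst, ← intervalIntegral.integral_sub (intervalIntegrable_const)
      (hf.intervalIntegrable _ _)]
    have hle : (k:ℝ)/N ≤ ((k:ℝ)+1)/N := by
      gcongr <;> linarith
    refine le_trans (intervalIntegral.norm_integral_le_of_norm_le_const (C := ε/2) ?_) ?_
    · intro y hy
      rw [Set.uIoc_of_le hle] at hy
      have hy1 : (k:ℝ)/N < y := hy.1
      have hy2 : y ≤ ((k:ℝ)+1)/N := hy.2
      have hy0 : 0 ≤ y := le_trans (by positivity) hy1.le
      have hyle1 : y ≤ 1 := le_trans hy2 (by rw [div_le_one hNpos]; exact hkN)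
      have hx01 : ((k:ℝ)+1)/N ∈ Set.Icc (0:ℝ) 1 :=
        ⟨by positivity, by rw [div_le_one hNpos]; exact hkN⟩
      have h1N : ((k:ℝ)+1)/N - (k:ℝ)/N = 1/N := by field_simp; ring
      have hdist : dist (((k:ℝ)+1)/N) y < δ := by
        rw [Real.dist_eq, _root_.abs_of_nonneg (by linarith)]
        linarith
      have := hδ' _ hx01 y ⟨hy0, hyle1⟩ hdist
      rw [dist_eq_norm] at this
      exact this.le
    · have : |((k:ℝ)+1)/N - (k:ℝ)/N| = 1/N := by
        rw [_root_.abs_of_nonneg (by linarith)]; field_simp; ring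
      rw [this]
  calc ‖∑ k ∈ Finset.range N, ((1/(N:ℂ)) * f (((k:ℝ)+1)/N)
        - ∫ y in ((k:ℝ)/N)..(((k:ℝ)+1)/N), f y)‖
      ≤ ∑ k ∈ Finset.range N, (ε/2) * (1/N) :=
        (norm_sum_le _ _).trans (Finset.sum_le_sum hterm)
    _ = ε/2 := by
        rw [Finset.sum_const, Finset.card_range, nsmul_eq_mul]
        field_simp
    _ < ε := by linarith


noncomputable def Fb (b : ℝ) : ℝ → ℂ := fun y => Complex.exp (2 * π * Complex.I * b * Real.sqrt (1 - y ^ 2))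

lemma Fb_cont (b : ℝ) : Continuous (Fb b) := by
  unfold Fb; fun_prop

lemma Fb_norm (b : ℝ) (y : ℝ) : ‖Fb b y‖ = 1 := by
  unfold Fb
  rw [Complex.norm_exp]
  norm_num [Complex.mul_re, Complex.mul_im]

noncomputable def gb : ℝ → ℝ := fun y => Real.sqrt (1 - y ^ 2) * y⁻¹
noncomputable def gb' : ℝ → ℝ := fun y => -(1 / Real.sqrt (1 - y ^ 2)) - Real.sqrt (1 - y ^ 2) / y ^ 2

lemma sqrt_pos_of_mem {y : ℝ} (hy0 : 0 < y) (hy1 : y < 1) : 0 < Real.sqrt (1 - y ^ 2) := by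
  apply Real.sqrt_pos.mpr; nlinarith

lemma hasDerivAt_phi {y : ℝ} (hy0 : 0 < y) (hy1 : y < 1) :
    HasDerivAt (fun y => Real.sqrt (1 - y ^ 2)) (-y / Real.sqrt (1 - y ^ 2)) y := by
  have h1 : (0:ℝ) < 1 - y ^ 2 := by nlinarith
  have h := (Real.hasDerivAt_sqrt h1.ne').comp y ((hasDerivAt_pow 2 y).const_sub 1)
  refine h.congr_deriv ?_
  have hs := sqrt_pos_of_mem hy0 hy1
  field_simp
  ring

lemma hasDerivAt_gb {y : ℝ} (hy0 : 0 < y) (hy1 : y < 1) :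
    HasDerivAt gb (gb' y) y := by
  have h := (hasDerivAt_phi hy0 hy1).mul (hasDerivAt_inv hy0.ne')
  refine h.congr_deriv ?_
  have hs := sqrt_pos_of_mem hy0 hy1
  unfold gb'
  field_simp
  ring

lemma hasDerivAt_Fb (b : ℝ) {y : ℝ} (hy0 : 0 < y) (hy1 : y < 1) :
    HasDerivAt (Fb b) ((2 * π * Complex.I * b) * ((-y / Real.sqrt (1 - y ^ 2) : ℝ) : ℂ) * Fb b y) y := by
  have h := (((hasDerivAt_phi hy0 hy1).ofReal_comp).const_mul (2 * π * Complex.I * b)).cexp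
  unfold Fb
  convert h using 1
  ring

set_option maxHeartbeats 2000000 in
lemma decay_aux (b : ℝ) (hb : b ≠ 0) (δ : ℝ) (hδ0 : 0 < δ) (hδ1 : δ < 1) :
    ‖∫ y in (0:ℝ)..1, Fb b y‖ ≤ δ + 1 / (π * |b| * δ) := by
  set c : ℂ := 2 * π * Complex.I * b with hc_def
  have hπ : (0:ℝ) < π := Real.pi_pos
  have hb' : 0 < |b| := abs_pos.mpr hb
  have hcnorm : ‖c‖ = 2 * π * |b| := by
    simp only [hc_def, norm_mul, Complex.norm_I, Complex.norm_real, Real.norm_eq_abs,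
      Complex.norm_ofNat]
    rw [_root_.abs_of_pos hπ]
    ring
  have hc : c ≠ 0 := by
    intro h
    rw [h, norm_zero] at hcnorm
    nlinarith
  set G : ℝ → ℂ := fun y => c⁻¹ * (-(gb y : ℂ)) * Fb b y with hG_def
  set H : ℝ → ℂ := fun y => c⁻¹ * (-(gb' y : ℂ)) * Fb b y with hH_def
  -- derivative of G
  have hG : ∀ y, 0 < y → y < 1 → HasDerivAt G (Fb b y + H y) y := by
    intro y hy0 hy1
    have hs := sqrt_pos_of_mem hy0 hy1
    have h1 : HasDerivAt (fun y => c⁻¹ * (-(gb y : ℂ))) (c⁻¹ * (-(gb' y : ℂ))) y :=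
      (((hasDerivAt_gb hy0 hy1).ofReal_comp).neg).const_mul c⁻¹
    have h2 := h1.mul (hasDerivAt_Fb b hy0 hy1)
    rw [← hc_def] at h2
    refine h2.congr_deriv ?_
    have hgφ : ((gb y : ℝ) : ℂ) * ((-y / Real.sqrt (1 - y ^ 2) : ℝ) : ℂ) = -1 := by
      rw [← Complex.ofReal_mul]
      norm_cast
      unfold gb
      field_simp
      ring
      simp
    have hkey : c⁻¹ * (-(gb y : ℂ)) * (c * ((-y / Real.sqrt (1 - y ^ 2) : ℝ) : ℂ) * Fb b y)
        = Fb b y := by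
      rw [show c⁻¹ * (-(gb y : ℂ)) * (c * ((-y / Real.sqrt (1 - y ^ 2) : ℝ) : ℂ) * Fb b y)
          = (c⁻¹ * c) * (-((gb y : ℂ) * ((-y / Real.sqrt (1 - y ^ 2) : ℝ) : ℂ))) * Fb b y from by
            ring,
        inv_mul_cancel₀ hc, hgφ]
      ring
    rw [hkey]
    simp only [hH_def]
    ring
  -- continuity facts on closed subintervals of (0,1)
  have hg'cont : ∀ t, δ ≤ t → t < 1 → ContinuousOn gb' (Set.uIcc δ t) := by
    intro t ht ht1
    rw [Set.uIcc_of_le ht]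
    have hne : ∀ y ∈ Set.Icc δ t, Real.sqrt (1 - y ^ 2) ≠ 0 := by
      intro y hy
      exact (sqrt_pos_of_mem (lt_of_lt_of_le hδ0 hy.1) (lt_of_le_of_lt hy.2 ht1)).ne'
    have hyne : ∀ y ∈ Set.Icc δ t, (y:ℝ) ^ 2 ≠ 0 := by
      intro y hy
      exact pow_ne_zero 2 (lt_of_lt_of_le hδ0 hy.1).ne'
    unfold gb'
    apply ContinuousOn.sub
    · exact (continuousOn_const.div ((Real.continuous_sqrt.comp (by continuity)).continuousOn) hne).neg
    · exact ((Real.continuous_sqrt.comp (by continuity)).continuousOn).div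
        (continuousOn_pow 2) hyne
  have hHcont : ∀ t, δ ≤ t → t < 1 → ContinuousOn H (Set.uIcc δ t) := by
    intro t ht ht1
    exact (continuousOn_const.mul ((Complex.continuous_ofReal.comp_continuousOn
      (hg'cont t ht ht1)).neg)).mul (Fb_cont b).continuousOn
  -- the main bound for t < 1
  have key : ∀ t, δ ≤ t → t < 1 → ‖∫ y in δ..t, Fb b y‖ ≤ 1 / (π * |b| * δ) := by
    intro t ht ht1
    have hmem : ∀ y ∈ Set.uIcc δ t, 0 < y ∧ y < 1 := by
      intro y hy
      rw [Set.uIcc_of_le ht] at hy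
      exact ⟨lt_of_lt_of_le hδ0 hy.1, lt_of_le_of_lt hy.2 ht1⟩
    have hHint : IntervalIntegrable H MeasureTheory.volume δ t :=
      (hHcont t ht ht1).intervalIntegrable
    have hFint : IntervalIntegrable (Fb b) MeasureTheory.volume δ t :=
      (Fb_cont b).intervalIntegrable _ _
    have hibp : ∫ y in δ..t, (Fb b y + H y) = G t - G δ :=
      intervalIntegral.integral_eq_sub_of_hasDerivAt
        (fun y hy => hG y (hmem y hy).1 (hmem y hy).2) (hFint.add hHint)
    have hsplit : ∫ y in δ..t, Fb b y = (G t - G δ) - ∫ y in δ..t, H y := by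
      rw [← hibp, intervalIntegral.integral_add hFint hHint]; ring
    -- bound for ‖∫ H‖
    have hg'int : IntervalIntegrable gb' MeasureTheory.volume δ t :=
      (hg'cont t ht ht1).intervalIntegrable
    have hgsub : ∫ y in δ..t, gb' y = gb t - gb δ :=
      intervalIntegral.integral_eq_sub_of_hasDerivAt
        (fun y hy => hasDerivAt_gb (hmem y hy).1 (hmem y hy).2) hg'int
    have hHnorm : ∀ y ∈ Set.uIcc δ t, ‖H y‖ = ‖c‖⁻¹ * (-(gb' y)) := by
      intro y hy
      obtain ⟨hy0, hy1⟩ := hmem y hy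
      have hs := sqrt_pos_of_mem hy0 hy1
      have hg'neg : gb' y ≤ 0 := by
        unfold gb'
        have h1 : 0 < 1 / Real.sqrt (1 - y ^ 2) := by positivity
        have h2 : 0 ≤ Real.sqrt (1 - y ^ 2) / y ^ 2 := by positivity
        linarith
      simp only [hH_def, norm_mul, norm_inv, norm_neg, Complex.norm_real, Fb_norm,
        mul_one, Real.norm_eq_abs]
      rw [abs_of_nonpos hg'neg]
    have hHbound : ‖∫ y in δ..t, H y‖ ≤ ‖c‖⁻¹ * (gb δ - gb t) := by
      calc ‖∫ y in δ..t, H y‖ ≤ ∫ y in δ..t, ‖H y‖ :=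
            intervalIntegral.norm_integral_le_integral_norm ht
        _ = ∫ y in δ..t, ‖c‖⁻¹ * (-(gb' y)) := by
            apply intervalIntegral.integral_congr
            intro y hy
            exact hHnorm y hy
        _ = ‖c‖⁻¹ * (gb δ - gb t) := by
            rw [intervalIntegral.integral_const_mul, intervalIntegral.integral_neg, hgsub]
            ring
    have hGnorm : ∀ y, 0 < y → y < 1 → ‖G y‖ = ‖c‖⁻¹ * gb y := by
      intro y hy0 hy1
      have hgnn : 0 ≤ gb y := by
        unfold gb; positivity
      simp only [hG_def, norm_mul, norm_inv, norm_neg, Complex.norm_real, Fb_norm,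
        mul_one, Real.norm_eq_abs]
      rw [_root_.abs_of_nonneg hgnn]
    have hgδ : gb δ ≤ 1 / δ := by
      unfold gb
      rw [div_eq_mul_inv]
      apply mul_le_mul_of_nonneg_right _ (by positivity)
      calc Real.sqrt (1 - δ ^ 2) ≤ Real.sqrt 1 := Real.sqrt_le_sqrt (by nlinarith)
        _ = 1 := Real.sqrt_one
    have hgt : 0 ≤ gb t := by
      unfold gb
      have := (hmem t (Set.right_mem_uIcc)).1
      positivity
    have hcninv : ‖c‖⁻¹ = 1 / (2 * π * |b|) := by rw [hcnorm]; ring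
    calc ‖∫ y in δ..t, Fb b y‖ ≤ ‖G t‖ + ‖G δ‖ + ‖∫ y in δ..t, H y‖ := by
          rw [hsplit]
          refine le_trans (norm_sub_le _ _) ?_
          gcongr
          exact norm_sub_le _ _
      _ ≤ ‖c‖⁻¹ * gb t + ‖c‖⁻¹ * gb δ + ‖c‖⁻¹ * (gb δ - gb t) := by
          rw [hGnorm t (hmem t Set.right_mem_uIcc).1 (hmem t Set.right_mem_uIcc).2,
            hGnorm δ hδ0 hδ1]
          gcongr
      _ = ‖c‖⁻¹ * (2 * gb δ) := by ring
      _ ≤ (1 / (2 * π * |b|)) * (2 * (1/δ)) := by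
          rw [hcninv]; gcongr
      _ = 1 / (π * |b| * δ) := by field_simp
  -- pass to the limit t → 1
  have hJ : Continuous (fun t => ∫ y in δ..t, Fb b y) :=
    intervalIntegral.continuous_primitive (fun u v => (Fb_cont b).intervalIntegrable u v) δ
  have hlim : ‖∫ y in δ..(1:ℝ), Fb b y‖ ≤ 1 / (π * |b| * δ) := by
    have hclosed : IsClosed {t : ℝ | ‖∫ y in δ..t, Fb b y‖ ≤ 1 / (π * |b| * δ)} :=
      isClosed_le (hJ.norm) continuous_const
    have hsub : Set.Ico δ 1 ⊆ {t : ℝ | ‖∫ y in δ..t, Fb b y‖ ≤ 1 / (π * |b| * δ)} :=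
      fun t htt => key t htt.1 htt.2
    have h1mem : (1:ℝ) ∈ closure (Set.Ico δ 1) := by
      rw [closure_Ico hδ1.ne]
      exact ⟨hδ1.le, le_refl 1⟩
    exact (hclosed.closure_subset_iff.mpr hsub) h1mem
  have hsplit2 : ∫ y in (0:ℝ)..1, Fb b y = (∫ y in (0:ℝ)..δ, Fb b y) + ∫ y in δ..(1:ℝ), Fb b y :=
    (intervalIntegral.integral_add_adjacent_intervals ((Fb_cont b).intervalIntegrable _ _)
      ((Fb_cont b).intervalIntegrable _ _)).symm
  have h0δ : ‖∫ y in (0:ℝ)..δ, Fb b y‖ ≤ δ := by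
    refine le_trans (intervalIntegral.norm_integral_le_of_norm_le_const (C := 1) ?_) ?_
    · intro y _; rw [Fb_norm]
    · rw [_root_.abs_of_nonneg (by linarith : (0:ℝ) ≤ δ - 0)]
      simp
  calc ‖∫ y in (0:ℝ)..1, Fb b y‖ ≤ ‖∫ y in (0:ℝ)..δ, Fb b y‖ + ‖∫ y in δ..(1:ℝ), Fb b y‖ := by
        rw [hsplit2]; exact norm_add_le _ _
    _ ≤ δ + 1 / (π * |b| * δ) := add_le_add h0δ hlim

theorem oscillatory_sum_limit_and_decay (a : ℝ) (ha : 0 < a) :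
    (∀ b : ℝ,
      Tendsto (fun N : ℕ =>
          (1 / (N : ℂ)) * ∑ j ∈ Finset.Icc 1 N,
            Complex.exp (2 * π * Complex.I * b * Real.sqrt (1 - ((j : ℝ) / N) ^ 2)))
        atTop
        (nhds (∫ y in (0:ℝ)..1,
          Complex.exp (2 * π * Complex.I * b * Real.sqrt (1 - y ^ 2))))) ∧
    (∃ C : ℝ, 0 < C ∧ ∀ b : ℝ,
      ‖∫ y in (0:ℝ)..1, Complex.exp (2 * π * Complex.I * b * Real.sqrt (1 - y ^ 2))‖ ≤
        C / Real.sqrt (1 + |b|)) := by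
  constructor
  · intro b
    exact riemann_sum_tendsto (Fb b) (Fb_cont b)
  · refine ⟨2, by norm_num, fun b => ?_⟩
    have hIeq : (∫ y in (0:ℝ)..1,
        Complex.exp (2 * π * Complex.I * b * Real.sqrt (1 - y ^ 2))) = ∫ y in (0:ℝ)..1, Fb b y :=
      rfl
    rw [hIeq]
    have hspos : (0:ℝ) < Real.sqrt (1 + |b|) := Real.sqrt_pos.mpr (by positivity)
    by_cases hb : |b| ≤ 1
    · have h1 : ‖∫ y in (0:ℝ)..1, Fb b y‖ ≤ 1 := by
        refine le_trans (intervalIntegral.norm_integral_le_of_norm_le_const (C := 1) ?_)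
          (by norm_num)
        intro y _
        exact (Fb_norm b y).le
      have h2 : Real.sqrt (1 + |b|) ≤ 2 := by
        rw [show (2:ℝ) = Real.sqrt 4 from by
          rw [show (4:ℝ) = 2 ^ 2 by norm_num, Real.sqrt_sq (by norm_num)]]
        exact Real.sqrt_le_sqrt (by linarith)
      rw [le_div_iff₀ hspos]
      nlinarith
    · push_neg at hb
      have hb0 : b ≠ 0 := by
        intro h; rw [h] at hb; simp at hb; linarith
      set s := Real.sqrt (1 + |b|) with hs_def
      have hs1 : 1 < s := by
        have h2 : Real.sqrt 1 < Real.sqrt (1 + |b|) :=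
          Real.sqrt_lt_sqrt (by norm_num) (by linarith)
        rwa [Real.sqrt_one] at h2
      have hs2 : s ^ 2 = 1 + |b| := Real.sq_sqrt (by positivity)
      have hπ3 : (3:ℝ) < π := Real.pi_gt_three
      have hbound := decay_aux b hb0 (1/s) (by positivity) (by
        rw [div_lt_one (by linarith)]; exact hs1)
      have heq : 1 / (π * |b| * (1/s)) = s / (π * |b|) := by
        field_simp
      have hkey2 : s / (π * |b|) ≤ 1 / s := by
        rw [div_le_div_iff₀ (by positivity) (by linarith)]
        nlinarith
      calc ‖∫ y in (0:ℝ)..1, Fb b y‖ ≤ 1/s + 1 / (π * |b| * (1/s)) := hbound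
        _ = 1/s + s / (π * |b|) := by rw [heq]
        _ ≤ 1/s + 1/s := by linarith
        _ = 2 / s := by ring
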